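/- Fix a real constant b and define f(a) = ∫_{-∞}^{+∞} Φ(a + bx) φ(x) dx. Then f is strictly increasing on ℝ and f(a) = ∫_{-∞}^{a} (1/(√(2π)√(1+b²))) e^{-t²/(2(1+b²))} dt for every a ∈ ℝ. -/

import Mathlib

open MeasureTheory Real

/-- The density of the standard normal distribution. -/
noncomputable def stdGaussianPDF (x : ℝ) : ℝ :=
  (Real.sqrt (2 * Real.pi))⁻¹ * Real.exp (-x ^ 2 / 2)

/-- The cumulative distribution function of the standard normal distribution. -/
noncomputable def stdGaussianCDF (x : ℝ) : ℝ :=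
  ∫ t in Set.Iic x, stdGaussianPDF t

open Set

lemma stdGaussianPDF_pos (x : ℝ) : 0 < stdGaussianPDF x :=
  mul_pos (inv_pos.2 (Real.sqrt_pos.2 (by positivity))) (Real.exp_pos _)

lemma stdGaussianPDF_eq (x : ℝ) :
    stdGaussianPDF x = (Real.sqrt (2 * Real.pi))⁻¹ * Real.exp (-(1/2 : ℝ) * x ^ 2) := by
  unfold stdGaussianPDF; ring_nf

lemma stdGaussianPDF_integrable : Integrable stdGaussianPDF := by
  have : stdGaussianPDF = fun x => (Real.sqrt (2 * Real.pi))⁻¹ * Real.exp (-(1/2 : ℝ) * x ^ 2) :=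
    funext stdGaussianPDF_eq
  rw [this]
  exact (integrable_exp_neg_mul_sq (by norm_num)).const_mul _

lemma stdGaussianPDF_integral : ∫ x, stdGaussianPDF x = 1 := by
  simp_rw [stdGaussianPDF_eq, integral_const_mul]
  rw [integral_gaussian, show Real.pi / (1/2 : ℝ) = 2 * Real.pi by ring,
    inv_mul_cancel₀ (ne_of_gt (Real.sqrt_pos.2 (by positivity)))]

lemma stdGaussianCDF_mono : Monotone stdGaussianCDF := by
  intro x y h
  exact setIntegral_mono_set stdGaussianPDF_integrable.integrableOn
    (Filter.Eventually.of_forall fun t => (stdGaussianPDF_pos t).le)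
    (HasSubset.Subset.eventuallyLE (Iic_subset_Iic.2 h))

lemma stdGaussianCDF_nonneg (x : ℝ) : 0 ≤ stdGaussianCDF x :=
  setIntegral_nonneg measurableSet_Iic fun t _ => (stdGaussianPDF_pos t).le

lemma stdGaussianCDF_le_one (x : ℝ) : stdGaussianCDF x ≤ 1 := by
  rw [← stdGaussianPDF_integral]
  exact setIntegral_le_integral stdGaussianPDF_integrable
    (Filter.Eventually.of_forall fun t => (stdGaussianPDF_pos t).le)

lemma stdGaussianCDF_shift (a c : ℝ) :
    stdGaussianCDF (a + c) = ∫ t in Iic a, stdGaussianPDF (t + c) := by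
  unfold stdGaussianCDF
  rw [show Iic a = (· + c) ⁻¹' Iic (a + c) from by ext t; simp]
  exact ((measurePreserving_add_right volume c).setIntegral_preimage_emb
    (measurableEmbedding_addRight c) stdGaussianPDF (Iic (a + c))).symm

lemma inner_gaussian (b t : ℝ) :
    ∫ x, stdGaussianPDF (t + b * x) * stdGaussianPDF x
      = (Real.sqrt (2 * Real.pi) * Real.sqrt (1 + b ^ 2))⁻¹
          * Real.exp (-t ^ 2 / (2 * (1 + b ^ 2))) := by
  have hb : (0:ℝ) < 1 + b ^ 2 := by positivity
  have hπ : (0:ℝ) < 2 * Real.pi := by positivity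
  have key : ∀ x : ℝ, stdGaussianPDF (t + b * x) * stdGaussianPDF x
      = ((2 * Real.pi)⁻¹ * Real.exp (-t ^ 2 / (2 * (1 + b ^ 2))))
        * Real.exp (-((1 + b ^ 2) / 2) * (x + b * t / (1 + b ^ 2)) ^ 2) := by
    intro x
    have hE : -(t + b * x) ^ 2 / 2 + -x ^ 2 / 2
        = -t ^ 2 / (2 * (1 + b ^ 2)) + -((1 + b ^ 2) / 2) * (x + b * t / (1 + b ^ 2)) ^ 2 := by
      field_simp
      ring
    unfold stdGaussianPDF
    rw [mul_mul_mul_comm, ← Real.exp_add, hE, Real.exp_add, ← mul_inv,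
      Real.mul_self_sqrt hπ.le]
    ring
  simp_rw [key]
  rw [integral_const_mul,
    integral_add_right_eq_self (fun y : ℝ => Real.exp (-((1 + b ^ 2) / 2) * y ^ 2))
      (b * t / (1 + b ^ 2)),
    integral_gaussian]
  rw [show Real.pi / ((1 + b ^ 2) / 2) = (2 * Real.pi) / (1 + b ^ 2) from by
      rw [div_div_eq_mul_div]; ring,
    Real.sqrt_div hπ.le]
  have h2 : Real.sqrt (2 * Real.pi) * Real.sqrt (2 * Real.pi) = 2 * Real.pi :=
    Real.mul_self_sqrt hπ.le
  have hs1 : Real.sqrt (2 * Real.pi) ≠ 0 := ne_of_gt (Real.sqrt_pos.2 hπ)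
  have hs2 : Real.sqrt (1 + b ^ 2) ≠ 0 := ne_of_gt (Real.sqrt_pos.2 hb)
  field_simp
  have hm : Real.sqrt (2 * Real.pi) = Real.sqrt 2 * Real.sqrt Real.pi :=
    Real.sqrt_mul (by norm_num) _
  linear_combination h2

lemma stdGaussianPDF_continuous : Continuous stdGaussianPDF := by
  unfold stdGaussianPDF
  fun_prop

lemma stdGaussianPDF_integrable_shift (c : ℝ) :
    Integrable (fun t : ℝ => stdGaussianPDF (t + c)) :=
  ((measurePreserving_add_right (volume : Measure ℝ) c).integrable_comp_emb
    (measurableEmbedding_addRight c)).2 stdGaussianPDF_integrable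

lemma stdGaussianCDF_measurable : Measurable stdGaussianCDF :=
  stdGaussianCDF_mono.measurable

noncomputable def gaussDensity (b t : ℝ) : ℝ :=
  (Real.sqrt (2 * Real.pi) * Real.sqrt (1 + b ^ 2))⁻¹
    * Real.exp (-t ^ 2 / (2 * (1 + b ^ 2)))

lemma gaussDensity_pos (b t : ℝ) : 0 < gaussDensity b t := by
  have hb : (0:ℝ) < 1 + b ^ 2 := by positivity
  exact mul_pos (inv_pos.2 (mul_pos (Real.sqrt_pos.2 (by positivity)) (Real.sqrt_pos.2 hb)))
    (Real.exp_pos _)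

lemma gaussDensity_integrable (b : ℝ) : Integrable (gaussDensity b) := by
  have hb : (0:ℝ) < 1 + b ^ 2 := by positivity
  have h1 : gaussDensity b = fun t => (Real.sqrt (2 * Real.pi) * Real.sqrt (1 + b ^ 2))⁻¹
      * Real.exp (-(2 * (1 + b ^ 2))⁻¹ * t ^ 2) := by
    funext t
    unfold gaussDensity
    congr 1
    ring
  rw [h1]
  exact (integrable_exp_neg_mul_sq (by positivity)).const_mul _

lemma key_eq (b a : ℝ) : (∫ x, stdGaussianCDF (a + b * x) * stdGaussianPDF x)
    = ∫ t in Iic a, gaussDensity b t := by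
  have h1 : ∀ x : ℝ, stdGaussianCDF (a + b * x) * stdGaussianPDF x
      = ∫ t in Iic a, stdGaussianPDF (t + b * x) * stdGaussianPDF x := by
    intro x
    rw [stdGaussianCDF_shift a (b * x)]
    exact (integral_mul_const (stdGaussianPDF x) _).symm
  have hmeas : AEStronglyMeasurable
      (fun z : ℝ × ℝ => stdGaussianPDF (z.2 + b * z.1) * stdGaussianPDF z.1)
      ((volume : Measure ℝ).prod ((volume : Measure ℝ).restrict (Iic a))) :=
    ((stdGaussianPDF_continuous.comp
        (continuous_snd.add (continuous_const.mul continuous_fst))).mul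
      (stdGaussianPDF_continuous.comp continuous_fst)).aestronglyMeasurable
  have hmeas2 : AEStronglyMeasurable
      (fun x : ℝ => stdGaussianCDF (a + b * x) * stdGaussianPDF x) volume :=
    (((stdGaussianCDF_measurable.comp (measurable_const.add
        (measurable_const.mul measurable_id))).mul
      stdGaussianPDF_continuous.measurable)).aestronglyMeasurable
  have hint : Integrable
      (fun z : ℝ × ℝ => stdGaussianPDF (z.2 + b * z.1) * stdGaussianPDF z.1)
      ((volume : Measure ℝ).prod ((volume : Measure ℝ).restrict (Iic a))) := by
    rw [integrable_prod_iff hmeas]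
    refine ⟨Filter.Eventually.of_forall fun x => ?_, ?_⟩
    · show Integrable (fun t : ℝ => stdGaussianPDF (t + b * x) * stdGaussianPDF x)
        ((volume : Measure ℝ).restrict (Iic a))
      exact ((stdGaussianPDF_integrable_shift (b * x)).mul_const _).restrict
    · show Integrable (fun x : ℝ => ∫ t in Iic a,
        ‖stdGaussianPDF (t + b * x) * stdGaussianPDF x‖) volume
      have heq : (fun x : ℝ => ∫ t in Iic a,
          ‖stdGaussianPDF (t + b * x) * stdGaussianPDF x‖)
          = fun x : ℝ => stdGaussianCDF (a + b * x) * stdGaussianPDF x := by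
        funext x
        simp_rw [norm_mul, Real.norm_of_nonneg (stdGaussianPDF_pos _).le]
        rw [integral_mul_const, ← stdGaussianCDF_shift]
      rw [heq]
      refine Integrable.mono' stdGaussianPDF_integrable hmeas2 ?_
      refine Filter.Eventually.of_forall fun x => ?_
      rw [Real.norm_of_nonneg
        (mul_nonneg (stdGaussianCDF_nonneg _) (stdGaussianPDF_pos _).le)]
      calc stdGaussianCDF (a + b * x) * stdGaussianPDF x
          ≤ 1 * stdGaussianPDF x :=
            mul_le_mul_of_nonneg_right (stdGaussianCDF_le_one _) (stdGaussianPDF_pos _).le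
        _ = stdGaussianPDF x := one_mul _
  calc (∫ x, stdGaussianCDF (a + b * x) * stdGaussianPDF x)
      = ∫ x, ∫ t in Iic a, stdGaussianPDF (t + b * x) * stdGaussianPDF x := by
        simp_rw [h1]
    _ = ∫ t in Iic a, ∫ x, stdGaussianPDF (t + b * x) * stdGaussianPDF x :=
        integral_integral_swap (f := fun x t : ℝ => stdGaussianPDF (t + b * x) * stdGaussianPDF x)
          hint
    _ = ∫ t in Iic a, gaussDensity b t :=
        setIntegral_congr_fun measurableSet_Iic fun t _ => inner_gaussian b t

/-- `f(a) = ∫ Φ(a + bx) φ(x) dx` is strictly increasing and equals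
`∫_{-∞}^a (1/(√(2π)√(1+b²))) e^{-t²/(2(1+b²))} dt`. -/
theorem integral_stdGaussianCDF_affine_strictMono_and_eq (b : ℝ) :
    StrictMono (fun a : ℝ => ∫ x, stdGaussianCDF (a + b * x) * stdGaussianPDF x) ∧
      ∀ a : ℝ,
        (∫ x, stdGaussianCDF (a + b * x) * stdGaussianPDF x)
          = ∫ t in Set.Iic a,
              (Real.sqrt (2 * Real.pi) * Real.sqrt (1 + b ^ 2))⁻¹
                * Real.exp (-t ^ 2 / (2 * (1 + b ^ 2))) := by
  refine ⟨?_, fun a => key_eq b a⟩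
  intro a a' h
  have hgint := gaussDensity_integrable b
  have hsplit : ∫ t in Iic a', gaussDensity b t
      = (∫ t in Iic a, gaussDensity b t) + ∫ t in Ioc a a', gaussDensity b t := by
    rw [← setIntegral_union (Iic_disjoint_Ioc le_rfl) measurableSet_Ioc
      hgint.integrableOn hgint.integrableOn, Iic_union_Ioc_eq_Iic h.le]
  have hpos : 0 < ∫ t in Ioc a a', gaussDensity b t := by
    rw [← intervalIntegral.integral_of_le h.le]
    exact intervalIntegral.intervalIntegral_pos_of_pos hgint.intervalIntegrable
      (gaussDensity_pos b) h
  show (∫ x, stdGaussianCDF (a + b * x) * stdGaussianPDF x)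
      < ∫ x, stdGaussianCDF (a' + b * x) * stdGaussianPDF x
  rw [key_eq b a, key_eq b a', hsplit]
  linarith
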